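/- Let h : ℝ → ℝ be the support-type function h t = ⟪γ t, n t⟫ (real inner product). Then for every t ∈ ℝ: iteratedDeriv 3 h t − ⟪γ t, iteratedDeriv 3 n t⟫ = −2 · deriv κ2 t + κ1 t · κ3 t. -/

import Mathlib

open scoped RealInnerProductSpace

noncomputable def cross3 (u v : EuclideanSpace ℝ (Fin 3)) : EuclideanSpace ℝ (Fin 3) :=
  (WithLp.equiv 2 (Fin 3 → ℝ)).symm
    ![u 1 * v 2 - u 2 * v 1, u 2 * v 0 - u 0 * v 2, u 0 * v 1 - u 1 * v 0]

noncomputable def det3 (u v w : EuclideanSpace ℝ (Fin 3)) : ℝ :=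
  Matrix.det (Matrix.of (fun i j => ![u, v, w] j i))

lemma iteratedDeriv_three {X : Type*} [NormedAddCommGroup X] [NormedSpace ℝ X] (f : ℝ → X) :
    iteratedDeriv 3 f = deriv (deriv (deriv f)) := by
  rw [(iteratedDeriv_succ : iteratedDeriv 3 f = _),
    (iteratedDeriv_succ : iteratedDeriv 2 f = _), iteratedDeriv_one]

theorem stmt6
    (γ e1 e2 e3 : ℝ → EuclideanSpace ℝ (Fin 3)) (κ1 κ2 κ3 : ℝ → ℝ)
    (hγ : ContDiff ℝ (⊤ : ℕ∞) γ)
    (he1s : ContDiff ℝ (⊤ : ℕ∞) e1) (he2s : ContDiff ℝ (⊤ : ℕ∞) e2)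
    (he3s : ContDiff ℝ (⊤ : ℕ∞) e3)
    (hκ1s : ContDiff ℝ (⊤ : ℕ∞) κ1) (hκ2s : ContDiff ℝ (⊤ : ℕ∞) κ2)
    (hκ3s : ContDiff ℝ (⊤ : ℕ∞) κ3)
    (he1 : e1 = deriv γ)
    (hON : ∀ t, Orthonormal ℝ ![e1 t, e2 t, e3 t])
    (hor : ∀ t, e3 t = cross3 (e1 t) (e2 t))
    (hE1 : ∀ t, deriv e1 t = κ1 t • e2 t + κ2 t • e3 t)
    (hE2 : ∀ t, deriv e2 t = (-(κ1 t)) • e1 t + κ3 t • e3 t)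
    (hE3 : ∀ t, deriv e3 t = (-(κ2 t)) • e1 t - κ3 t • e2 t)
    :
    ∀ t : ℝ,
      iteratedDeriv 3 (fun s => ⟪γ s, e3 s⟫) t - ⟪γ t, iteratedDeriv 3 e3 t⟫
        = -2 * deriv κ2 t + κ1 t * κ3 t := by
  intro t
  have htop : ((⊤ : ℕ∞) : WithTop ℕ∞) ≠ 0 := by simp
  -- orthonormality facts
  have o11 : ∀ s, ⟪e1 s, e1 s⟫ = 1 := fun s => by
    simpa using orthonormal_iff_ite.mp (hON s) 0 0
  have o12 : ∀ s, ⟪e1 s, e2 s⟫ = 0 := fun s => by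
    simpa using orthonormal_iff_ite.mp (hON s) 0 1
  have o13 : ∀ s, ⟪e1 s, e3 s⟫ = 0 := fun s => by
    simpa using orthonormal_iff_ite.mp (hON s) 0 2
  -- basic derivative facts
  have hγd : ∀ s, HasDerivAt γ (e1 s) s := fun s => by
    rw [he1]; exact (hγ.differentiable htop s).hasDerivAt
  have he1d : ∀ s, HasDerivAt e1 (κ1 s • e2 s + κ2 s • e3 s) s := fun s => by
    rw [← hE1 s]; exact (he1s.differentiable htop s).hasDerivAt
  have he2d : ∀ s, HasDerivAt e2 ((-(κ1 s)) • e1 s + κ3 s • e3 s) s := fun s => by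
    rw [← hE2 s]; exact (he2s.differentiable htop s).hasDerivAt
  have he3d : ∀ s, HasDerivAt e3 ((-(κ2 s)) • e1 s - κ3 s • e2 s) s := fun s => by
    rw [← hE3 s]; exact (he3s.differentiable htop s).hasDerivAt
  have hk1d : ∀ s, HasDerivAt κ1 (deriv κ1 s) s := fun s =>
    (hκ1s.differentiable htop s).hasDerivAt
  have hk2d : ∀ s, HasDerivAt κ2 (deriv κ2 s) s := fun s =>
    (hκ2s.differentiable htop s).hasDerivAt
  have hk3d : ∀ s, HasDerivAt κ3 (deriv κ3 s) s := fun s =>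
    (hκ3s.differentiable htop s).hasDerivAt
  have hk2dd : ∀ s, HasDerivAt (deriv κ2) (deriv (deriv κ2) s) s := fun s =>
    (((contDiff_infty_iff_deriv.mp hκ2s).2).differentiable htop s).hasDerivAt
  have hk3dd : ∀ s, HasDerivAt (deriv κ3) (deriv (deriv κ3) s) s := fun s =>
    (((contDiff_infty_iff_deriv.mp hκ3s).2).differentiable htop s).hasDerivAt
  -- support function derivatives
  have hq1 : ∀ s, HasDerivAt (fun u => ⟪γ u, e1 u⟫)
      (1 + κ1 s * ⟪γ s, e2 s⟫ + κ2 s * ⟪γ s, e3 s⟫) s := fun s =>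
    (HasDerivAt.inner ℝ (hγd s) (he1d s)).congr_deriv (by
      simp only [inner_add_right, real_inner_smul_right, o11 s]; ring)
  have hq2 : ∀ s, HasDerivAt (fun u => ⟪γ u, e2 u⟫)
      (-(κ1 s) * ⟪γ s, e1 s⟫ + κ3 s * ⟪γ s, e3 s⟫) s := fun s =>
    (HasDerivAt.inner ℝ (hγd s) (he2d s)).congr_deriv (by
      simp only [inner_add_right, real_inner_smul_right, o12 s]; ring)
  have hq3 : ∀ s, HasDerivAt (fun u => ⟪γ u, e3 u⟫)
      (-(κ2 s) * ⟪γ s, e1 s⟫ - κ3 s * ⟪γ s, e2 s⟫) s := fun s =>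
    (HasDerivAt.inner ℝ (hγd s) (he3d s)).congr_deriv (by
      simp only [inner_sub_right, real_inner_smul_right, o13 s]; ring)
  have hder1 : deriv (fun s => ⟪γ s, e3 s⟫)
      = fun s => -(κ2 s) * ⟪γ s, e1 s⟫ - κ3 s * ⟪γ s, e2 s⟫ :=
    funext fun s => (hq3 s).deriv
  -- second derivative of h
  have hD2 : ∀ s, HasDerivAt (fun u => -(κ2 u) * ⟪γ u, e1 u⟫ - κ3 u * ⟪γ u, e2 u⟫)
      ((-(deriv κ2 s) * ⟪γ s, e1 s⟫ +
          -(κ2 s) * (1 + κ1 s * ⟪γ s, e2 s⟫ + κ2 s * ⟪γ s, e3 s⟫)) -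
        (deriv κ3 s * ⟪γ s, e2 s⟫ +
          κ3 s * (-(κ1 s) * ⟪γ s, e1 s⟫ + κ3 s * ⟪γ s, e3 s⟫))) s := fun s =>
    ((hk2d s).neg.mul (hq1 s)).sub ((hk3d s).mul (hq2 s))
  have hder2 : deriv (fun s => -(κ2 s) * ⟪γ s, e1 s⟫ - κ3 s * ⟪γ s, e2 s⟫)
      = fun s => (-(deriv κ2 s) * ⟪γ s, e1 s⟫ +
          -(κ2 s) * (1 + κ1 s * ⟪γ s, e2 s⟫ + κ2 s * ⟪γ s, e3 s⟫)) -
        (deriv κ3 s * ⟪γ s, e2 s⟫ +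
          κ3 s * (-(κ1 s) * ⟪γ s, e1 s⟫ + κ3 s * ⟪γ s, e3 s⟫)) :=
    funext fun s => (hD2 s).deriv
  -- third derivative of h at t
  have hD3 := ((((hk2dd t).neg.mul (hq1 t)).add
      ((hk2d t).neg.mul (((hasDerivAt_const t (1 : ℝ)).add ((hk1d t).mul (hq2 t))).add
        ((hk2d t).mul (hq3 t))))).sub
    (((hk3dd t).mul (hq2 t)).add
      ((hk3d t).mul (((hk1d t).neg.mul (hq1 t)).add ((hk3d t).mul (hq3 t))))))
  -- derivatives of e3
  have he3der1 : deriv e3 = fun s => (-(κ2 s)) • e1 s - κ3 s • e2 s := funext hE3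
  have hE2v : ∀ s, HasDerivAt (fun u => (-(κ2 u)) • e1 u - κ3 u • e2 u)
      (((-(κ2 s)) • (κ1 s • e2 s + κ2 s • e3 s) + (-(deriv κ2 s)) • e1 s) -
        (κ3 s • ((-(κ1 s)) • e1 s + κ3 s • e3 s) + deriv κ3 s • e2 s)) s := fun s =>
    ((hk2d s).neg.smul (he1d s)).sub ((hk3d s).smul (he2d s))
  have he3der2 : deriv (deriv e3)
      = fun s => ((-(κ2 s)) • (κ1 s • e2 s + κ2 s • e3 s) + (-(deriv κ2 s)) • e1 s) -
        (κ3 s • ((-(κ1 s)) • e1 s + κ3 s • e3 s) + deriv κ3 s • e2 s) := by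
    rw [he3der1]; exact funext fun s => (hE2v s).deriv
  have hW := ((((hk2d t).neg.smul (((hk1d t).smul (he2d t)).add
        ((hk2d t).smul (he3d t)))).add ((hk2dd t).neg.smul (he1d t))).sub
    (((hk3d t).smul (((hk1d t).neg.smul (he1d t)).add
        ((hk3d t).smul (he3d t)))).add ((hk3dd t).smul (he2d t))))
  erw [iteratedDeriv_three, iteratedDeriv_three, hder1, hder2, hD3.deriv,
    he3der2, hW.deriv]
  simp only [inner_sub_right, inner_add_right, real_inner_smul_right, Pi.add_apply, Pi.mul_apply,
    Pi.neg_apply, Pi.smul_apply, Pi.smul_apply', Pi.sub_apply, smul_eq_mul]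
  ring
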